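/- The feasibility set {(x, f) : T̄_i/x_i + C_{ij}D_{ij}/f_{ij} ≤ T for all i,j; Σ_i x_i = 1; Σ_{i,j} f_{ij} ≤ F; x_i, f_{ij} > 0} is nonempty if and only if Σ_{i=1}^N T̄_i ≤ T (with strict inequality needed if any D_{ij} > 0) and (Σ_i √(T̄_i Σ_j C_{ij}D_{ij}))²/(T(T − Σ_i T̄_i)) + Σ_{i,j} C_{ij}D_{ij}/T ≤ F. -/

import Mathlib

open Finset

/-- Feasibility of {(x,f) : T̄_i/x_i + C_{ij}D_{ij}/f_{ij} ≤ T, Σ x_i = 1,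
Σ f_{ij} ≤ F, x_i, f_{ij} > 0}: nonempty iff Σ T̄_i < T (strict since all
D_{ij} > 0) and (Σ_i √(T̄_i Σ_j C_{ij}D_{ij}))²/(T(T − Σ T̄_i)) +
Σ_{ij} C_{ij}D_{ij}/T ≤ F. -/
theorem stmt_7 (N : ℕ) (hN : 0 < N) (M : Fin N → ℕ) (hM : ∀ i, 0 < M i)
    (C D : (i : Fin N) → Fin (M i) → ℝ) (Tb : Fin N → ℝ) (T F : ℝ)
    (hC : ∀ i j, 0 < C i j) (hD : ∀ i j, 0 < D i j) (hTb : ∀ i, 0 < Tb i)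
    (hT : 0 < T) (hF : 0 < F) :
    (∃ (x : Fin N → ℝ) (f : (i : Fin N) → Fin (M i) → ℝ),
        (∀ i, 0 < x i) ∧ (∀ i j, 0 < f i j) ∧
        (∀ i j, Tb i / x i + C i j * D i j / f i j ≤ T) ∧
        (∑ i, x i = 1) ∧ (∑ i, ∑ j, f i j ≤ F)) ↔
      ((∑ i, Tb i < T) ∧
        (∑ i, Real.sqrt (Tb i * ∑ j, C i j * D i j)) ^ 2 / (T * (T - ∑ i, Tb i)) +
          (∑ i, ∑ j, C i j * D i j) / T ≤ F) := by
  have hNne : (Finset.univ : Finset (Fin N)).Nonempty := by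
    haveI : NeZero N := ⟨hN.ne'⟩
    exact Finset.univ_nonempty
  set S : Fin N → ℝ := fun i => ∑ j, C i j * D i j with hSdef
  have hSrw : (∑ i, Real.sqrt (Tb i * ∑ j, C i j * D i j)) ^ 2 / (T * (T - ∑ i, Tb i)) +
      (∑ i, ∑ j, C i j * D i j) / T
      = (∑ i, Real.sqrt (Tb i * S i)) ^ 2 / (T * (T - ∑ i, Tb i)) + (∑ i, S i) / T := rfl
  rw [hSrw]
  have hSpos : ∀ i, 0 < S i := by
    intro i
    haveI : Nonempty (Fin (M i)) := ⟨⟨0, hM i⟩⟩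
    exact Finset.sum_pos (fun j _ => mul_pos (hC i j) (hD i j)) Finset.univ_nonempty
  have hapos : ∀ i, 0 < Real.sqrt (Tb i * S i) :=
    fun i => Real.sqrt_pos.mpr (mul_pos (hTb i) (hSpos i))
  constructor
  · rintro ⟨x, f, hx, hf, hcon, hsum, hfs⟩
    have hux : ∀ i, Tb i < T * x i := by
      intro i
      have h := hcon i ⟨0, hM i⟩
      have hpos : 0 < C i ⟨0, hM i⟩ * D i ⟨0, hM i⟩ / f i ⟨0, hM i⟩ :=
        div_pos (mul_pos (hC i _) (hD i _)) (hf i _)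
      have : Tb i / x i < T := by linarith
      exact (div_lt_iff₀ (hx i)).mp this
    set u : Fin N → ℝ := fun i => T * x i - Tb i with hudef
    have hueq : ∀ i, u i = T * x i - Tb i := fun i => rfl
    have hu : ∀ i, 0 < u i := fun i => by rw [hueq i]; linarith [hux i]
    have hsumTb : ∑ i, Tb i < T := by
      calc ∑ i, Tb i < ∑ i, T * x i :=
            Finset.sum_lt_sum_of_nonempty hNne (fun i _ => hux i)
        _ = T := by rw [← Finset.mul_sum, hsum, mul_one]
    refine ⟨hsumTb, ?_⟩
    have hsumu : ∑ i, u i = T - ∑ i, Tb i := by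
      calc ∑ i, u i = ∑ i, (T * x i - Tb i) := rfl
        _ = T - ∑ i, Tb i := by
            rw [Finset.sum_sub_distrib, ← Finset.mul_sum, hsum, mul_one]
    have hΔ : 0 < T - ∑ i, Tb i := by linarith
    -- lower bound on inner sums of f
    have hfi : ∀ i, Tb i * S i / (T * u i) + S i / T ≤ ∑ j, f i j := by
      intro i
      have hxne := (hx i).ne'
      have hune := (hu i).ne'
      have hTne := hT.ne'
      have h1 : ∀ j, C i j * D i j * x i / u i ≤ f i j := by
        intro j
        have h := hcon i j
        have e : u i / x i = T - Tb i / x i := by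
          rw [hueq i]; field_simp
        have h2 : C i j * D i j / f i j ≤ u i / x i := by rw [e]; linarith
        rw [div_le_div_iff₀ (hf i j) (hx i)] at h2
        rw [div_le_iff₀ (hu i)]
        nlinarith [hx i, hf i j, hu i]
      have h3 : S i * x i / u i ≤ ∑ j, f i j := by
        have hs := Finset.sum_le_sum (fun j (_ : j ∈ Finset.univ) => h1 j)
        have hSi : S i = ∑ j, C i j * D i j := rfl
        calc S i * x i / u i = ∑ j, C i j * D i j * x i / u i := by
              rw [hSi, Finset.sum_mul, Finset.sum_div]
          _ ≤ ∑ j, f i j := hs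
      have heq : S i * x i / u i = Tb i * S i / (T * u i) + S i / T := by
        have hx' : x i = (Tb i + u i) / T := by
          rw [eq_div_iff hTne]; rw [hueq i]; ring
        rw [hx']
        field_simp
      linarith [h3, heq.ge]
    have hsumf : (∑ i, Tb i * S i / (T * u i)) + (∑ i, S i) / T ≤ F := by
      calc (∑ i, Tb i * S i / (T * u i)) + (∑ i, S i) / T
          = ∑ i, (Tb i * S i / (T * u i) + S i / T) := by
            rw [Finset.sum_add_distrib, Finset.sum_div]
        _ ≤ ∑ i, ∑ j, f i j := Finset.sum_le_sum (fun i _ => hfi i)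
        _ ≤ F := hfs
    -- Cauchy-Schwarz
    have cauchy : (∑ i, Real.sqrt (Tb i * S i)) ^ 2 ≤
        (∑ i, u i) * ∑ i, Tb i * S i / u i := by
      apply Finset.sum_sq_le_sum_mul_sum_of_sq_eq_mul
      · exact fun i _ => (hu i).le
      · exact fun i _ => div_nonneg (mul_pos (hTb i) (hSpos i)).le (hu i).le
      · intro i _
        rw [Real.sq_sqrt (mul_pos (hTb i) (hSpos i)).le]
        have := (hu i).ne'
        field_simp
    have h1 : (∑ i, Real.sqrt (Tb i * S i)) ^ 2 / (T - ∑ i, Tb i) ≤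
        ∑ i, Tb i * S i / u i := by
      rw [div_le_iff₀ hΔ, ← hsumu, mul_comm]
      exact cauchy
    have h2 : ∑ i, Tb i * S i / (T * u i) = (∑ i, Tb i * S i / u i) / T := by
      rw [Finset.sum_div]
      refine Finset.sum_congr rfl (fun i _ => ?_)
      rw [div_div]; ring
    have hstep : (∑ i, Real.sqrt (Tb i * S i)) ^ 2 / (T * (T - ∑ i, Tb i)) ≤
        ∑ i, Tb i * S i / (T * u i) := by
      rw [h2, mul_comm, ← div_div]
      gcongr
    linarith [hstep, hsumf]
  · rintro ⟨hlt, hbound⟩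
    set Δ : ℝ := T - ∑ i, Tb i with hΔdef
    have hΔ : 0 < Δ := by rw [hΔdef]; linarith
    set a : Fin N → ℝ := fun i => Real.sqrt (Tb i * S i) with hadef
    have haeq : ∀ i, a i = Real.sqrt (Tb i * S i) := fun i => rfl
    set A : ℝ := ∑ i, a i with hAdef
    have hA : 0 < A := Finset.sum_pos (fun i _ => hapos i) hNne
    set u : Fin N → ℝ := fun i => Δ * a i / A with hudef
    have hueq : ∀ i, u i = Δ * a i / A := fun i => rfl
    have hu : ∀ i, 0 < u i := fun i => div_pos (mul_pos hΔ (hapos i)) hA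
    have hsumu : ∑ i, u i = Δ := by
      calc ∑ i, u i = ∑ i, Δ * a i / A := rfl
        _ = Δ := by
            rw [← Finset.sum_div, ← Finset.mul_sum, ← hAdef, mul_div_assoc,
              div_self hA.ne', mul_one]
    refine ⟨fun i => (Tb i + u i) / T, fun i j => C i j * D i j * (Tb i + u i) / (T * u i),
      ?_, ?_, ?_, ?_, ?_⟩
    · exact fun i => div_pos (by linarith [hTb i, hu i]) hT
    · exact fun i j => div_pos (by nlinarith [mul_pos (hC i j) (hD i j), hTb i, hu i])
        (mul_pos hT (hu i))
    · intro i j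
      have hxi : (0:ℝ) < Tb i + u i := by linarith [hTb i, hu i]
      have hCD : 0 < C i j * D i j := mul_pos (hC i j) (hD i j)
      have e1 : Tb i / ((Tb i + u i) / T) = T * Tb i / (Tb i + u i) := by
        rw [div_div_eq_mul_div, mul_comm]
      have e2 : C i j * D i j / (C i j * D i j * (Tb i + u i) / (T * u i)) =
          T * u i / (Tb i + u i) := by
        rw [div_div_eq_mul_div, div_eq_div_iff (by positivity) hxi.ne']
        ring
      rw [e1, e2, ← add_div, div_le_iff₀ hxi]
      ring_nf
      nlinarith [hxi, hT]
    · rw [← Finset.sum_div, Finset.sum_add_distrib, hsumu, hΔdef]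
      field_simp
      ring
    · have hfsum : ∀ i, ∑ j, C i j * D i j * (Tb i + u i) / (T * u i) =
          Tb i * S i / (T * u i) + S i / T := by
        intro i
        have hune := (hu i).ne'
        have hTne := hT.ne'
        have hSi : S i = ∑ j, C i j * D i j := rfl
        have e : ∑ j, C i j * D i j * (Tb i + u i) / (T * u i)
            = S i * (Tb i + u i) / (T * u i) := by
          rw [hSi, Finset.sum_mul, Finset.sum_div]
        rw [e]
        field_simp
      rw [Finset.sum_congr rfl (fun i _ => hfsum i)]
      have hterm : ∀ i, Tb i * S i / (T * u i) = a i * A / (T * Δ) := by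
        intro i
        have haa : Tb i * S i = a i * a i :=
          (Real.mul_self_sqrt (mul_pos (hTb i) (hSpos i)).le).symm
        rw [haa, hueq i, div_eq_div_iff (by exact (mul_pos hT (hu i)).ne') (mul_pos hT hΔ).ne']
        field_simp
      rw [Finset.sum_add_distrib, Finset.sum_congr rfl (fun i _ => hterm i)]
      have hsq : ∑ i, a i * A / (T * Δ) = A ^ 2 / (T * Δ) := by
        rw [← Finset.sum_div, ← Finset.sum_mul, ← hAdef, sq]
      rw [hsq, ← Finset.sum_div]
      exact hbound
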